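/- Let T be a primitive (irreducible and aperiodic) matrix with strictly positive entries on its nonzero pattern, and for d ∈ ℝ let T^{(d)} denote the matrix with entries (T_{ij})^d on the nonzero pattern and 0 elsewhere, where all nonzero T_{ij} satisfy 0 < T_{ij} < 1. Then the spectral radius function d ↦ λ(T^{(d)}) is strictly decreasing and continuous on ℝ, tends to 0 as d → ∞, and λ(T^{(0)}) ≥ 1 if T has at least one nonzero entry per row; consequently there is at most one d ≥ 0 with λ(T^{(d)}) = 1. -/

import Mathlib

open Matrix Filter

/-- The Perron--Frobenius eigenvalue (spectral radius) of a real square matrix,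
computed via the spectrum of its complexification. -/
noncomputable def perronRadius {n : ℕ} (M : Matrix (Fin n) (Fin n) ℝ) : ENNReal :=
  ⨆ k ∈ spectrum ℂ (M.map (Complex.ofReal)), (‖k‖₊ : ENNReal)

/-- The entrywise `d`-th power of `T` on its nonzero pattern. -/
noncomputable def entrywisePow {n : ℕ} (T : Matrix (Fin n) (Fin n) ℝ) (d : ℝ) :
    Matrix (Fin n) (Fin n) ℝ :=
  fun i j => if T i j ≠ 0 then (T i j) ^ d else 0

attribute [local instance] Matrix.linftyOpNormedRing Matrix.linftyOpNormedAlgebra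

noncomputable instance {n : ℕ} : CompleteSpace (Matrix (Fin n) (Fin n) ℂ) :=
  FiniteDimensional.complete ℂ _

lemma mapc_pow {n : ℕ} (M : Matrix (Fin n) (Fin n) ℝ) (k : ℕ) :
    (M.map (Complex.ofReal)) ^ k = (M ^ k).map (Complex.ofReal) := by
  have := map_pow (Complex.ofRealHom.mapMatrix (m := Fin n)) M k
  simp only [RingHom.mapMatrix_apply] at this; exact this.symm

lemma perron_eq {n : ℕ} (M : Matrix (Fin n) (Fin n) ℝ) :
    perronRadius M = spectralRadius ℂ (M.map (Complex.ofReal)) := rfl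

lemma tendsto_perron {n : ℕ} (M : Matrix (Fin n) (Fin n) ℝ) :
    Tendsto (fun k : ℕ => (‖(M ^ k).map (Complex.ofReal)‖₊ : ENNReal) ^ (1 / (k:ℝ))) atTop
      (nhds (perronRadius M)) := by
  have h := spectrum.pow_nnnorm_pow_one_div_tendsto_nhds_spectralRadius (M.map (Complex.ofReal))
  rw [perron_eq]
  have e : (fun k : ℕ => (‖(M ^ k).map (Complex.ofReal)‖₊ : ENNReal) ^ (1 / (k:ℝ)))
      = fun k : ℕ => (‖(M.map (Complex.ofReal)) ^ k‖₊ : ENNReal) ^ (1 / (k:ℝ)) := by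
    funext k; rw [mapc_pow]
  rw [e]; exact h

variable {n : ℕ}

lemma pow_entry_nonneg {M : Matrix (Fin n) (Fin n) ℝ} (h : ∀ i j, 0 ≤ M i j) (k : ℕ) :
    ∀ i j, 0 ≤ (M ^ k) i j := by
  induction k with
  | zero =>
    intro i j
    by_cases hij : i = j <;> simp [Matrix.one_apply, hij]
  | succ k ih =>
    intro i j
    rw [pow_succ, Matrix.mul_apply]
    exact Finset.sum_nonneg fun l _ => mul_nonneg (ih i l) (h l j)

lemma pow_entry_mono {A B : Matrix (Fin n) (Fin n) ℝ} (h0 : ∀ i j, 0 ≤ A i j)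
    (hAB : ∀ i j, A i j ≤ B i j) (k : ℕ) : ∀ i j, (A ^ k) i j ≤ (B ^ k) i j := by
  have hB0 : ∀ i j, 0 ≤ B i j := fun i j => (h0 i j).trans (hAB i j)
  induction k with
  | zero => intro i j; simp
  | succ k ih =>
    intro i j
    rw [pow_succ, pow_succ, Matrix.mul_apply, Matrix.mul_apply]
    refine Finset.sum_le_sum fun l _ => ?_
    exact mul_le_mul (ih i l) (hAB l j) (h0 l j) (pow_entry_nonneg hB0 k i l)

lemma nnnorm_map_mono {A B : Matrix (Fin n) (Fin n) ℝ} (h0 : ∀ i j, 0 ≤ A i j)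
    (hAB : ∀ i j, A i j ≤ B i j) :
    ‖A.map (Complex.ofReal)‖₊ ≤ ‖B.map (Complex.ofReal)‖₊ := by
  rw [Matrix.linfty_opNNNorm_def, Matrix.linfty_opNNNorm_def]
  refine Finset.sup_mono_fun fun i _ => Finset.sum_le_sum fun j _ => ?_
  simp only [Matrix.map_apply, Complex.nnnorm_real]
  rw [Real.nnnorm_of_nonneg (h0 i j), Real.nnnorm_of_nonneg ((h0 i j).trans (hAB i j))]
  exact_mod_cast hAB i j

lemma diag_le_nnnorm_map {A : Matrix (Fin n) (Fin n) ℝ} (h0 : ∀ i j, 0 ≤ A i j) (i : Fin n) :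
    ‖A i i‖₊ ≤ ‖A.map (Complex.ofReal)‖₊ := by
  rw [Matrix.linfty_opNNNorm_def]
  refine le_trans ?_ (Finset.le_sup (Finset.mem_univ i))
  refine le_trans ?_ (Finset.single_le_sum (f := fun j => ‖(A.map Complex.ofReal) i j‖₊)
    (fun j _ => zero_le) (Finset.mem_univ i))
  simp [Matrix.map_apply]

attribute [local instance] Matrix.linfty_opNormOneClass

lemma perron_ne_top (hn : 0 < n) (M : Matrix (Fin n) (Fin n) ℝ) : perronRadius M ≠ ⊤ := by
  have : Nonempty (Fin n) := ⟨⟨0, hn⟩⟩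
  have h := spectrum.spectralRadius_le_nnnorm (𝕜 := ℂ) (M.map (Complex.ofReal))
  rw [← perron_eq] at h
  exact ne_top_of_le_ne_top ENNReal.coe_ne_top h

lemma perron_mono {A B : Matrix (Fin n) (Fin n) ℝ} (h0 : ∀ i j, 0 ≤ A i j)
    (hAB : ∀ i j, A i j ≤ B i j) : perronRadius A ≤ perronRadius B := by
  refine le_of_tendsto_of_tendsto' (tendsto_perron A) (tendsto_perron B) fun k => ?_
  refine ENNReal.rpow_le_rpow ?_ (by positivity)
  exact_mod_cast nnnorm_map_mono (pow_entry_nonneg h0 k) (pow_entry_mono h0 hAB k)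

lemma perron_smul (c : ℝ) (A : Matrix (Fin n) (Fin n) ℝ) :
    perronRadius (c • A) = (‖c‖₊ : ENNReal) * perronRadius A := by
  have hA := tendsto_perron A
  have h2 : Tendsto (fun k : ℕ => (‖((c • A) ^ k).map (Complex.ofReal)‖₊ : ENNReal) ^ (1 / (k:ℝ)))
      atTop (nhds ((‖c‖₊ : ENNReal) * perronRadius A)) := by
    have hmul := ENNReal.Tendsto.const_mul (a := (‖c‖₊ : ENNReal)) hA (Or.inr ENNReal.coe_ne_top)
    refine Tendsto.congr' ?_ hmul
    filter_upwards [eventually_ge_atTop 1] with k hk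
    have hk0 : (k : ℝ) ≠ 0 := Nat.cast_ne_zero.mpr (by omega)
    have e1 : ((c • A) ^ k).map (Complex.ofReal)
        = ((c : ℂ) ^ k) • ((A ^ k).map (Complex.ofReal)) := by
      rw [smul_pow]
      ext i j
      simp [Matrix.map_apply, Complex.ofReal_mul, Complex.ofReal_pow]
    rw [e1, nnnorm_smul, nnnorm_pow, Complex.nnnorm_real, ENNReal.coe_mul, ENNReal.coe_pow,
      ENNReal.mul_rpow_of_nonneg _ _ (by positivity), ← ENNReal.rpow_natCast (‖c‖₊ : ENNReal) k,
      ← ENNReal.rpow_mul, mul_one_div, div_self hk0, ENNReal.rpow_one]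
  exact tendsto_nhds_unique (tendsto_perron (c • A)) h2

lemma perron_diag_lb (hn : 0 < n) {M : Matrix (Fin n) (Fin n) ℝ} (h0 : ∀ i j, 0 ≤ M i j)
    {m : ℕ} (hm : 0 < m) {ε : NNReal} (hd : ∀ i, (ε : ℝ) ≤ (M ^ m) i i) :
    (ε : ENNReal) ^ (1 / (m : ℝ)) ≤ perronRadius M := by
  set i0 : Fin n := ⟨0, hn⟩
  have key : ∀ k : ℕ, ((ε : ℝ)) ^ (k + 1) ≤ (M ^ (m * (k + 1))) i0 i0 := by
    intro k
    induction k with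
    | zero => simpa using hd i0
    | succ k ih =>
      have hsplit : M ^ (m * (k + 2)) = M ^ (m * (k + 1)) * M ^ m := by
        rw [← pow_add]; ring_nf
      rw [hsplit, Matrix.mul_apply]
      have hterm : (ε : ℝ) ^ (k + 1) * (ε : ℝ)
          ≤ (M ^ (m * (k + 1))) i0 i0 * (M ^ m) i0 i0 :=
        mul_le_mul ih (hd i0) ε.coe_nonneg (pow_entry_nonneg h0 _ i0 i0)
      calc (ε : ℝ) ^ (k + 2) = (ε : ℝ) ^ (k + 1) * (ε : ℝ) := by ring
        _ ≤ (M ^ (m * (k + 1))) i0 i0 * (M ^ m) i0 i0 := hterm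
        _ ≤ ∑ l, (M ^ (m * (k + 1))) i0 l * (M ^ m) l i0 := by
            refine Finset.single_le_sum (f := fun l => (M ^ (m * (k + 1))) i0 l * (M ^ m) l i0)
              (fun l _ => mul_nonneg (pow_entry_nonneg h0 _ i0 l) (pow_entry_nonneg h0 _ l i0))
              (Finset.mem_univ i0)
  have hsub : Tendsto (fun k : ℕ => m * (k + 1)) atTop atTop := by
    refine tendsto_atTop_mono (fun k => ?_) tendsto_id
    calc (id k : ℕ) ≤ k + 1 := Nat.le_succ k
      _ ≤ m * (k + 1) := Nat.le_mul_of_pos_left _ hm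
  refine ge_of_tendsto ((tendsto_perron M).comp hsub) (Eventually.of_forall fun k => ?_)
  show (ε : ENNReal) ^ (1 / (m : ℝ))
      ≤ (‖(M ^ (m * (k + 1))).map (Complex.ofReal)‖₊ : ENNReal) ^ (1 / ((m * (k + 1) : ℕ) : ℝ))
  have hnn : (ε ^ (k + 1) : NNReal) ≤ ‖(M ^ (m * (k + 1))) i0 i0‖₊ := by
    have hent := (pow_entry_nonneg h0 (m * (k + 1))) i0 i0
    rw [Real.nnnorm_of_nonneg hent]
    exact_mod_cast key k
  have hle : ((ε : ENNReal) ^ (k + 1)) ≤ ‖(M ^ (m * (k + 1))).map (Complex.ofReal)‖₊ := by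
    calc ((ε : ENNReal) ^ (k + 1)) = ((ε ^ (k + 1) : NNReal) : ENNReal) := by push_cast; ring
      _ ≤ (‖(M ^ (m * (k + 1))) i0 i0‖₊ : ENNReal) := ENNReal.coe_le_coe.mpr hnn
      _ ≤ _ := ENNReal.coe_le_coe.mpr (diag_le_nnnorm_map (pow_entry_nonneg h0 _) i0)
  have := ENNReal.rpow_le_rpow hle (z := 1 / ((m * (k + 1) : ℕ) : ℝ)) (by positivity)
  rw [← ENNReal.rpow_natCast (ε : ENNReal) (k + 1), ← ENNReal.rpow_mul] at this
  convert this using 2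
  have hm0 : (m : ℝ) ≠ 0 := Nat.cast_ne_zero.mpr hm.ne'
  have hk0 : ((k : ℝ) + 1) ≠ 0 := by positivity
  push_cast
  field_simp

lemma pow_pos_pattern {T A : Matrix (Fin n) (Fin n) ℝ} (hT : ∀ i j, 0 ≤ T i j)
    (hA : ∀ i j, 0 ≤ A i j) (hpat : ∀ i j, 0 < T i j → 0 < A i j) (k : ℕ) :
    ∀ i j, 0 < (T ^ k) i j → 0 < (A ^ k) i j := by
  induction k with
  | zero => intro i j; simp
  | succ k ih =>
    intro i j h
    rw [pow_succ, Matrix.mul_apply] at h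
    have : ∃ l, 0 < (T ^ k) i l * T l j := by
      by_contra hc
      push_neg at hc
      have : ∑ l, (T ^ k) i l * T l j ≤ 0 := Finset.sum_nonpos fun l _ => hc l
      linarith
    obtain ⟨l, hl⟩ := this
    have h1 : 0 < (T ^ k) i l := by
      rcases lt_or_eq_of_le (pow_entry_nonneg hT k i l) with h' | h'
      · exact h'
      · exfalso; rw [← h'] at hl; simp at hl
    have h2 : 0 < T l j := by
      rcases lt_or_eq_of_le (hT l j) with h' | h'
      · exact h'
      · exfalso; rw [← h'] at hl; simp at hl
    rw [pow_succ, Matrix.mul_apply]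
    have hterm : 0 < (A ^ k) i l * A l j := mul_pos (ih i l h1) (hpat l j h2)
    calc (0:ℝ) < (A ^ k) i l * A l j := hterm
      _ ≤ ∑ l', (A ^ k) i l' * A l' j :=
        Finset.single_le_sum (f := fun l' => (A ^ k) i l' * A l' j)
          (fun l' _ => mul_nonneg (pow_entry_nonneg hA k i l') (hA l' j)) (Finset.mem_univ l)

lemma pow_one_le_pattern {A : Matrix (Fin n) (Fin n) ℝ} (hA : ∀ i j, A i j = 0 ∨ 1 ≤ A i j)
    (k : ℕ) : ∀ i j, (A ^ k) i j = 0 ∨ 1 ≤ (A ^ k) i j := by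
  have hA0 : ∀ i j, 0 ≤ A i j := by
    intro i j; rcases hA i j with h | h
    · exact h.ge
    · linarith
  induction k with
  | zero =>
    intro i j
    by_cases hij : i = j <;> simp [Matrix.one_apply, hij]
  | succ k ih =>
    intro i j
    rw [pow_succ, Matrix.mul_apply]
    by_cases hz : ∀ l, (A ^ k) i l * A l j = 0
    · left; exact Finset.sum_eq_zero fun l _ => hz l
    · right
      push_neg at hz
      obtain ⟨l, hl⟩ := hz
      have h1 : 1 ≤ (A ^ k) i l := by
        rcases ih i l with h' | h'
        · exfalso; apply hl; rw [h', zero_mul]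
        · exact h'
      have h2 : 1 ≤ A l j := by
        rcases hA l j with h' | h'
        · exfalso; apply hl; rw [h', mul_zero]
        · exact h'
      calc (1:ℝ) ≤ (A ^ k) i l * A l j := one_le_mul_of_one_le_of_one_le h1 h2
        _ ≤ ∑ l', (A ^ k) i l' * A l' j :=
          Finset.single_le_sum (f := fun l' => (A ^ k) i l' * A l' j)
            (fun l' _ => mul_nonneg (pow_entry_nonneg hA0 k i l') (hA0 l' j)) (Finset.mem_univ l)

lemma prim_ge_one {T : Matrix (Fin n) (Fin n) ℝ} (hT : ∀ i j, 0 ≤ T i j)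
    (hrow : ∀ i, ∃ j, T i j ≠ 0) {k : ℕ} (hk : ∀ i j, 0 < (T ^ k) i j) :
    ∀ i j, 0 < (T ^ (k + 1)) i j := by
  intro i j
  obtain ⟨l, hl⟩ := hrow i
  have hl' : 0 < T i l := lt_of_le_of_ne (hT i l) (Ne.symm hl)
  rw [pow_succ', Matrix.mul_apply]
  calc (0:ℝ) < T i l * (T ^ k) l j := mul_pos hl' (hk l j)
    _ ≤ ∑ l', T i l' * (T ^ k) l' j :=
      Finset.single_le_sum (f := fun l' => T i l' * (T ^ k) l' j)
        (fun l' _ => mul_nonneg (hT i l') (pow_entry_nonneg hT k l' j)) (Finset.mem_univ l)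

lemma e_nonneg {T : Matrix (Fin n) (Fin n) ℝ} (hT : ∀ i j, 0 ≤ T i j) (d : ℝ) :
    ∀ i j, 0 ≤ entrywisePow T d i j := by
  intro i j
  unfold entrywisePow
  split
  · exact (Real.rpow_pos_of_pos (lt_of_le_of_ne (hT i j) (Ne.symm (by assumption))) d).le
  · exact le_refl 0

lemma e_pos {T : Matrix (Fin n) (Fin n) ℝ} (hT : ∀ i j, 0 ≤ T i j) (d : ℝ) {i j : Fin n}
    (h : T i j ≠ 0) : 0 < entrywisePow T d i j := by
  unfold entrywisePow
  rw [if_pos h]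
  exact Real.rpow_pos_of_pos (lt_of_le_of_ne (hT i j) (Ne.symm h)) d

lemma e_apply_ne {T : Matrix (Fin n) (Fin n) ℝ} (d : ℝ) {i j : Fin n} (h : T i j ≠ 0) :
    entrywisePow T d i j = (T i j) ^ d := if_pos h

lemma e_apply_eq {T : Matrix (Fin n) (Fin n) ℝ} (d : ℝ) {i j : Fin n} (h : T i j = 0) :
    entrywisePow T d i j = 0 := by unfold entrywisePow; rw [if_neg (by simpa using h)]

lemma rho_pos (hn : 0 < n) {T : Matrix (Fin n) (Fin n) ℝ}
    (hT : ∀ i j, 0 ≤ T i j) (hrow : ∀ i, ∃ j, T i j ≠ 0)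
    (hprim : ∃ k : ℕ, ∀ i j, 0 < (T ^ k) i j) (d : ℝ) :
    0 < perronRadius (entrywisePow T d) := by
  obtain ⟨k, hk⟩ := hprim
  have hm : ∀ i j, 0 < (T ^ (k + 1)) i j := prim_ge_one hT hrow hk
  set A := entrywisePow T d with hA
  have hA0 : ∀ i j, 0 ≤ A i j := e_nonneg hT d
  have hpat : ∀ i j, 0 < T i j → 0 < A i j := fun i j h => e_pos hT d h.ne'
  have hAm : ∀ i j, 0 < (A ^ (k + 1)) i j :=
    fun i j => pow_pos_pattern hT hA0 hpat (k + 1) i j (hm i j)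
  have hne : (Finset.univ : Finset (Fin n)).Nonempty := ⟨⟨0, hn⟩, Finset.mem_univ _⟩
  set εr := Finset.univ.inf' hne (fun i => (A ^ (k + 1)) i i) with hεr
  have hεpos : 0 < εr := (Finset.lt_inf'_iff hne).mpr fun i _ => hAm i i
  have hd : ∀ i, (εr.toNNReal : ℝ) ≤ (A ^ (k + 1)) i i := by
    intro i
    rw [Real.coe_toNNReal _ hεpos.le]
    exact Finset.inf'_le _ (Finset.mem_univ i)
  refine lt_of_lt_of_le ?_ (perron_diag_lb hn hA0 (Nat.succ_pos k) hd)
  refine ENNReal.rpow_pos ?_ ENNReal.coe_ne_top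
  exact ENNReal.coe_pos.mpr (Real.toNNReal_pos.mpr hεpos)

lemma rho_ge_one (hn : 0 < n) {T : Matrix (Fin n) (Fin n) ℝ}
    (hT : ∀ i j, 0 ≤ T i j) (hrow : ∀ i, ∃ j, T i j ≠ 0)
    (hprim : ∃ k : ℕ, ∀ i j, 0 < (T ^ k) i j) :
    1 ≤ perronRadius (entrywisePow T 0) := by
  obtain ⟨k, hk⟩ := hprim
  have hm : ∀ i j, 0 < (T ^ (k + 1)) i j := prim_ge_one hT hrow hk
  set A := entrywisePow T 0 with hA
  have hA0 : ∀ i j, 0 ≤ A i j := e_nonneg hT 0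
  have hpat : ∀ i j, 0 < T i j → 0 < A i j := fun i j h => e_pos hT 0 h.ne'
  have hAm : ∀ i j, 0 < (A ^ (k + 1)) i j :=
    fun i j => pow_pos_pattern hT hA0 hpat (k + 1) i j (hm i j)
  have hent : ∀ i j, A i j = 0 ∨ 1 ≤ A i j := by
    intro i j
    by_cases h : T i j = 0
    · left; rw [hA]; exact e_apply_eq 0 h
    · right; rw [hA, e_apply_ne 0 h, Real.rpow_zero]
  have hd : ∀ i, ((1 : NNReal) : ℝ) ≤ (A ^ (k + 1)) i i := by
    intro i
    rcases pow_one_le_pattern hent (k + 1) i i with h | h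
    · exact absurd h (hAm i i).ne'
    · simpa using h
  have := perron_diag_lb hn hA0 (Nat.succ_pos k) hd
  rwa [ENNReal.coe_one, ENNReal.one_rpow] at this

theorem perron_radius_entrywise_pow
    {n : ℕ} (hn : 0 < n) (T : Matrix (Fin n) (Fin n) ℝ)
    (hnonneg : ∀ i j, 0 ≤ T i j) (hlt : ∀ i j, T i j < 1)
    (hrow : ∀ i, ∃ j, T i j ≠ 0)
    (hprim : ∃ k : ℕ, ∀ i j, 0 < (T ^ k) i j) :
    StrictAnti (fun d : ℝ => perronRadius (entrywisePow T d)) ∧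
    Continuous (fun d : ℝ => perronRadius (entrywisePow T d)) ∧
    Tendsto (fun d : ℝ => perronRadius (entrywisePow T d)) atTop (nhds 0) ∧
    1 ≤ perronRadius (entrywisePow T 0) ∧
    ∀ d₁ d₂ : ℝ, 0 ≤ d₁ → 0 ≤ d₂ →
      perronRadius (entrywisePow T d₁) = 1 → perronRadius (entrywisePow T d₂) = 1 →
      d₁ = d₂ := by
  have hTpos : ∀ i j, T i j ≠ 0 → 0 < T i j :=
    fun i j h => lt_of_le_of_ne (hnonneg i j) (Ne.symm h)
  set s : Finset (Fin n × Fin n) := Finset.univ.filter (fun p => T p.1 p.2 ≠ 0) with hs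
  have hsne : s.Nonempty := by
    obtain ⟨j, hj⟩ := hrow ⟨0, hn⟩
    exact ⟨(⟨0, hn⟩, j), by simp [hs, hj]⟩
  set tmin := s.inf' hsne (fun p => T p.1 p.2) with htmindef
  set tmax := s.sup' hsne (fun p => T p.1 p.2) with htmaxdef
  have htmin0 : 0 < tmin := (Finset.lt_inf'_iff hsne).mpr fun p hp =>
    hTpos p.1 p.2 (by simpa [hs] using hp)
  have htmax1 : tmax < 1 := (Finset.sup'_lt_iff hsne).mpr fun p _ => hlt p.1 p.2
  have hminle : ∀ i j, T i j ≠ 0 → tmin ≤ T i j :=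
    fun i j h => Finset.inf'_le (fun p => T p.1 p.2) (show (i, j) ∈ s by simp [hs, h])
  have hlemax : ∀ i j, T i j ≠ 0 → T i j ≤ tmax :=
    fun i j h => Finset.le_sup' (fun p => T p.1 p.2) (show (i, j) ∈ s by simp [hs, h])
  have htmax0 : 0 < tmax := by
    obtain ⟨p, hp⟩ := hsne
    have hp' : T p.1 p.2 ≠ 0 := by simpa [hs] using hp
    exact lt_of_lt_of_le (hTpos p.1 p.2 hp') (hlemax _ _ hp')
  have htmin1 : tmin < 1 := by
    obtain ⟨p, hp⟩ := hsne
    have hp' : T p.1 p.2 ≠ 0 := by simpa [hs] using hp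
    exact lt_of_le_of_lt (hminle _ _ hp') (hlt p.1 p.2)
  set f := fun d : ℝ => perronRadius (entrywisePow T d) with hf
  have hftop : ∀ d, f d ≠ ⊤ := fun d => perron_ne_top hn _
  have hfpos : ∀ d, 0 < f d := fun d => rho_pos hn hnonneg hrow hprim d
  have key_le : ∀ (d' d c : ℝ), (∀ i j, entrywisePow T d' i j ≤ c * entrywisePow T d i j) →
      f d' ≤ (‖c‖₊ : ENNReal) * f d := by
    intro d' d c h
    have := perron_mono (e_nonneg hnonneg d') (B := c • entrywisePow T d)
      (fun i j => by simpa [Matrix.smul_apply] using h i j)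
    rwa [perron_smul] at this
  have key_ge : ∀ (d' d c : ℝ), 0 ≤ c →
      (∀ i j, c * entrywisePow T d i j ≤ entrywisePow T d' i j) →
      (‖c‖₊ : ENNReal) * f d ≤ f d' := by
    intro d' d c hc h
    have h0 : ∀ i j, 0 ≤ (c • entrywisePow T d) i j := fun i j => by
      simpa [Matrix.smul_apply] using mul_nonneg hc (e_nonneg hnonneg d i j)
    have := perron_mono h0 (fun i j => by simpa [Matrix.smul_apply] using h i j)
    rwa [perron_smul] at this
  have hsplit : ∀ (d δ : ℝ) (i j : Fin n), T i j ≠ 0 →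
      entrywisePow T (d + δ) i j = (T i j) ^ δ * entrywisePow T d i j := by
    intro d δ i j h
    rw [e_apply_ne _ h, e_apply_ne _ h, add_comm, Real.rpow_add (hTpos i j h)]
  have hnncoe : ∀ c : ℝ, 0 ≤ c → ((‖c‖₊ : ℝ) = c) := by
    intro c hc; rw [coe_nnnorm, Real.norm_eq_abs, abs_of_nonneg hc]
  -- StrictAnti
  have hanti : StrictAnti f := by
    intro d1 d2 h12
    set c := tmax ^ (d2 - d1) with hc
    have hc0 : 0 < c := Real.rpow_pos_of_pos htmax0 _
    have hc1 : c < 1 := Real.rpow_lt_one htmax0.le htmax1 (by linarith)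
    have hentry : ∀ i j, entrywisePow T d2 i j ≤ c * entrywisePow T d1 i j := by
      intro i j
      by_cases h : T i j = 0
      · rw [e_apply_eq _ h, e_apply_eq _ h, mul_zero]
      · have e2 : entrywisePow T d2 i j = (T i j) ^ (d2 - d1) * entrywisePow T d1 i j := by
          have := hsplit d1 (d2 - d1) i j h
          rwa [add_sub_cancel] at this
        rw [e2]
        refine mul_le_mul_of_nonneg_right ?_ (e_nonneg hnonneg d1 i j)
        exact Real.rpow_le_rpow (hTpos i j h).le (hlemax i j h) (by linarith)
    have h1 := key_le d2 d1 c hentry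
    refine lt_of_le_of_lt h1 ?_
    have hlt1 : (‖c‖₊ : ENNReal) < 1 := by
      rw [← ENNReal.coe_one, ENNReal.coe_lt_coe]
      have : (‖c‖₊ : ℝ) < 1 := by rw [hnncoe c hc0.le]; exact hc1
      exact_mod_cast this
    calc (‖c‖₊ : ENNReal) * f d1 < 1 * f d1 :=
          ENNReal.mul_lt_mul_left (hfpos d1).ne' (hftop d1) hlt1
      _ = f d1 := one_mul _
  -- Continuity
  have hcont : Continuous f := by
    rw [continuous_iff_continuousAt]
    intro d
    have habs : Tendsto (fun d' : ℝ => |d' - d|) (nhds d) (nhds 0) := by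
      have : Tendsto (fun d' : ℝ => |d' - d|) (nhds d) (nhds |d - d|) :=
        ((continuous_id.sub continuous_const).abs).tendsto d
      simpa using this
    have hrpow : Tendsto (fun x : ℝ => tmin ^ x) (nhds 0) (nhds 1) := by
      have := (Real.continuousAt_const_rpow (a := tmin) (b := 0) htmin0.ne').tendsto
      simpa [Real.rpow_zero] using this
    have h1 : Tendsto (fun d' : ℝ => tmin ^ |d' - d|) (nhds d) (nhds 1) := hrpow.comp habs
    have h2 : Tendsto (fun d' : ℝ => tmin ^ (-|d' - d|)) (nhds d) (nhds 1) := by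
      have hneg : Tendsto (fun d' : ℝ => -|d' - d|) (nhds d) (nhds 0) := by
        simpa using habs.neg
      exact hrpow.comp hneg
    have hcoe : ∀ {g : ℝ → ℝ}, Tendsto g (nhds d) (nhds 1) →
        Tendsto (fun d' => (‖g d'‖₊ : ENNReal) * f d) (nhds d) (nhds (f d)) := by
      intro g hg
      have : Tendsto (fun d' => (‖g d'‖₊ : ENNReal)) (nhds d) (nhds 1) := by
        rw [← ENNReal.coe_one]
        exact ENNReal.tendsto_coe.mpr (by simpa [nnnorm_one] using hg.nnnorm)
      have := ENNReal.Tendsto.mul_const (b := f d) this (Or.inl one_ne_zero)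
      simpa [one_mul] using this
    have hLt := hcoe h1
    have hUt := hcoe h2
    have hL : ∀ d', (‖tmin ^ |d' - d|‖₊ : ENNReal) * f d ≤ f d' := by
      intro d'
      refine key_ge d' d _ (Real.rpow_pos_of_pos htmin0 _).le fun i j => ?_
      by_cases h : T i j = 0
      · rw [e_apply_eq _ h, e_apply_eq _ h, mul_zero]
      · have e2 : entrywisePow T d' i j = (T i j) ^ (d' - d) * entrywisePow T d i j := by
          have := hsplit d (d' - d) i j h
          rwa [add_sub_cancel] at this
        rw [e2]
        refine mul_le_mul_of_nonneg_right ?_ (e_nonneg hnonneg d i j)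
        calc tmin ^ |d' - d| ≤ (T i j) ^ |d' - d| :=
              Real.rpow_le_rpow htmin0.le (hminle i j h) (abs_nonneg _)
          _ ≤ (T i j) ^ (d' - d) :=
              Real.rpow_le_rpow_of_exponent_ge (hTpos i j h) (hlt i j).le (le_abs_self _)
    have hU : ∀ d', f d' ≤ (‖tmin ^ (-|d' - d|)‖₊ : ENNReal) * f d := by
      intro d'
      refine key_le d' d _ fun i j => ?_
      by_cases h : T i j = 0
      · rw [e_apply_eq _ h, e_apply_eq _ h, mul_zero]
      · have e2 : entrywisePow T d' i j = (T i j) ^ (d' - d) * entrywisePow T d i j := by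
          have := hsplit d (d' - d) i j h
          rwa [add_sub_cancel] at this
        rw [e2]
        refine mul_le_mul_of_nonneg_right ?_ (e_nonneg hnonneg d i j)
        calc (T i j) ^ (d' - d) ≤ (T i j) ^ (-|d' - d|) :=
              Real.rpow_le_rpow_of_exponent_ge (hTpos i j h) (hlt i j).le (neg_abs_le _)
          _ ≤ tmin ^ (-|d' - d|) := by
              rw [Real.rpow_neg (hTpos i j h).le, Real.rpow_neg htmin0.le]
              exact inv_anti₀ (Real.rpow_pos_of_pos htmin0 _)
                (Real.rpow_le_rpow htmin0.le (hminle i j h) (abs_nonneg _))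
    exact tendsto_of_tendsto_of_tendsto_of_le_of_le hLt hUt hL hU
  -- Tendsto atTop
  have htend : Tendsto f atTop (nhds 0) := by
    have hub : ∀ d : ℝ, 0 ≤ d → f d ≤ (‖tmax ^ d‖₊ : ENNReal) * f 0 := by
      intro d hd
      refine key_le d 0 _ fun i j => ?_
      by_cases h : T i j = 0
      · rw [e_apply_eq _ h, e_apply_eq _ h, mul_zero]
      · rw [e_apply_ne _ h, e_apply_ne _ h, Real.rpow_zero, mul_one]
        exact Real.rpow_le_rpow (hTpos i j h).le (hlemax i j h) hd
    have ht0 : Tendsto (fun d : ℝ => (‖tmax ^ d‖₊ : ENNReal) * f 0) atTop (nhds 0) := by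
      have hreal : Tendsto (fun d : ℝ => tmax ^ d) atTop (nhds 0) :=
        tendsto_rpow_atTop_of_base_lt_one tmax (by linarith) htmax1
      have : Tendsto (fun d : ℝ => (‖tmax ^ d‖₊ : ENNReal)) atTop (nhds 0) := by
        rw [← ENNReal.coe_zero]
        exact ENNReal.tendsto_coe.mpr (by simpa [nnnorm_zero] using hreal.nnnorm)
      have := ENNReal.Tendsto.mul_const (b := f 0) this (Or.inr (hftop 0))
      simpa [zero_mul] using this
    refine tendsto_of_tendsto_of_tendsto_of_le_of_le' tendsto_const_nhds ht0
      (Eventually.of_forall fun d => zero_le) ?_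
    filter_upwards [eventually_ge_atTop (0 : ℝ)] with d hd
    exact hub d hd
  exact ⟨hanti, hcont, htend, rho_ge_one hn hnonneg hrow hprim,
    fun d1 d2 _ _ h1 h2 => hanti.injective (h1.trans h2.symm)⟩
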